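/- Let n ≥ 1 and let R be a commutative ring. Let D be a finite type of arcs on the vertex set {0,1,…,n} with source, target and weight maps satisfying t(e) ≠ 0 and s(e) ≠ t(e) for all e, let a, b, c ∈ {0,1,…,n} with b ≠ 0, a ≠ b, c ≠ b, and let ω ∈ R. Let Γ be the weighted matrix digraph whose arcs are D together with one extra arc e from a to b of weight ω, and let Γ' be the digraph whose arcs are D together with one extra arc e' from c to b of weight ω. Suppose that b and c are not strongly connected in Γ'. Then for every arborescence B of Γ that contains the arc e, the arc set obtained from B by replacing e with e' (i.e. (B \ {e}) ∪ {e'}) is an arborescence of Γ'. -/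

import Mathlib

attribute [local instance] Classical.propDecidable

/-- A directed path within the arc set `S` from `u` to `v`: a nonempty list of arcs `e₁,…,e_r`
of `S` with `s e₁ = u`, `t eₖ = s eₖ₊₁` for `k < r`, and `t e_r = v`. -/
def HasPathIn {V E : Type*} (s t : E → V) (S : Finset E) (u v : V) : Prop :=
  ∃ (l : List E) (hl : l ≠ []), (∀ e ∈ l, e ∈ S) ∧
    List.Chain' (fun e f => t e = s f) l ∧ s (l.head hl) = u ∧ t (l.getLast hl) = v

/-- A directed cycle within the arc set `S`: a nonempty list of arcs `e₁,…,e_r` of `S` with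
`t eₖ = s eₖ₊₁` for `k < r` and `t e_r = s e₁`. -/
def HasCycleIn {V E : Type*} (s t : E → V) (S : Finset E) : Prop :=
  ∃ (l : List E) (hl : l ≠ []), (∀ e ∈ l, e ∈ S) ∧
    List.Chain' (fun e f => t e = s f) l ∧ t (l.getLast hl) = s (l.head hl)

/-- An arborescence of the matrix digraph on vertices `{0,…,n}`: a set `S` of `n` arcs such
that every vertex `i ∈ {1,…,n}` is the target of exactly one arc of `S` and `S` contains no
directed cycle. -/
def IsArbor {E : Type*} (n : ℕ) (s t : E → Fin (n + 1)) (S : Finset E) : Prop :=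
  S.card = n ∧ (∀ i : Fin (n + 1), i ≠ 0 → ∃! e, e ∈ S ∧ t e = i) ∧ ¬ HasCycleIn s t S

/-- Vertices `u` and `v` are strongly connected in the digraph with arcs `E`: there is a
directed path from `u` to `v` and one from `v` to `u` among all arcs. -/
def StronglyConnectedIn {V E : Type*} [Fintype E] (s t : E → V) (u v : V) : Prop :=
  HasPathIn s t Finset.univ u v ∧ HasPathIn s t Finset.univ v u

lemma chain'_congr_aux {E V : Type*} (s s' t t' : E → V) (l : List E)
    (h : ∀ e ∈ l, s e = s' e ∧ t e = t' e) :
    List.Chain' (fun e f => t e = s f) l → List.Chain' (fun e f => t' e = s' f) l := by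
  induction l with
  | nil => intro _; exact List.isChain_nil
  | cons x l ih =>
    intro hc
    rcases l with _ | ⟨y, l⟩
    · exact List.isChain_singleton _
    · simp only [List.Chain'] at hc ⊢
      rw [List.isChain_cons_cons] at hc ⊢
      refine ⟨?_, ih (fun e he => h e (List.mem_cons_of_mem _ he)) hc.2⟩
      rw [← (h x (by simp)).2, ← (h y (by simp)).1]
      exact hc.1


/-- Let `Γ` have arcs `D` plus an extra arc `e : a → b` of weight `ω`, and
`Γ'` have arcs `D` plus the extra arc `e' : c → b` of weight `ω`. If `b` and `c` are not
strongly connected in `Γ'`, then for every arborescence `B` of `Γ` containing `e`, the arc set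
`(B \ {e}) ∪ {e'}` is an arborescence of `Γ'`. -/
theorem replaced_arc_arborescence
    (n : ℕ) (hn : 1 ≤ n) (R : Type*) [CommRing R]
    (D : Type*) [Fintype D] [DecidableEq D]
    (sD tD : D → Fin (n + 1)) (wD : D → R)
    (htD : ∀ e, tD e ≠ 0) (hsD : ∀ e, sD e ≠ tD e)
    (a b c : Fin (n + 1)) (hb : b ≠ 0) (hab : a ≠ b) (hcb : c ≠ b) (ω : R)
    (hΓ' : ¬ StronglyConnectedIn (Sum.elim sD fun _ : Unit => c)
            (Sum.elim tD fun _ : Unit => b) b c)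
    (B : Finset (D ⊕ Unit))
    (hB : IsArbor n (Sum.elim sD fun _ : Unit => a) (Sum.elim tD fun _ : Unit => b) B)
    (heB : Sum.inr () ∈ B) :
    IsArbor n (Sum.elim sD fun _ : Unit => c) (Sum.elim tD fun _ : Unit => b)
      (insert (Sum.inr ()) (B.erase (Sum.inr ()))) := by
  rw [Finset.insert_erase heB]
  obtain ⟨hcard, huniq, hnocyc⟩ := hB
  refine ⟨hcard, huniq, ?_⟩
  set s' : D ⊕ Unit → Fin (n + 1) := Sum.elim sD fun _ : Unit => c with hs'
  set t' : D ⊕ Unit → Fin (n + 1) := Sum.elim tD fun _ : Unit => b with ht'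
  set s₀ : D ⊕ Unit → Fin (n + 1) := Sum.elim sD fun _ : Unit => a with hs₀
  rintro ⟨l, hl, hmem, hchain, hwrap⟩
  rcases Classical.em (Sum.inr () ∈ l) with hin | hin
  · -- build strong connectivity between b and c in Γ'
    apply hΓ'
    have hcb' : HasPathIn s' t' Finset.univ c b :=
      ⟨[Sum.inr ()], by simp, fun e _ => Finset.mem_univ e, List.isChain_singleton _,
        by simp [hs'], by simp [ht']⟩
    refine ⟨?_, hcb'⟩
    obtain ⟨l₁, l₂, rfl⟩ := List.append_of_mem hin
    simp only [List.Chain'] at hchain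
    rw [List.isChain_append, List.isChain_cons] at hchain
    obtain ⟨h1, ⟨h20, h2⟩, hj⟩ := hchain
    by_cases h1n : l₁ = []
    · subst h1n
      by_cases h2n : l₂ = []
      · subst h2n
        simp only [List.nil_append] at hwrap
        simp only [List.getLast_singleton, List.head_cons, hs', ht', Sum.elim_inr] at hwrap
        exact absurd hwrap.symm hcb
      · -- path is l₂
        simp only [List.nil_append] at hwrap
        rw [List.getLast_cons h2n, List.head_cons] at hwrap
        refine ⟨l₂, h2n, fun e _ => Finset.mem_univ e, h2, ?_, ?_⟩
        · have := h20 (l₂.head h2n) (by rw [List.head?_eq_head h2n]; exact rfl)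
          rw [← this]; simp [ht']
        · rw [hwrap]; simp [hs']
    · by_cases h2n : l₂ = []
      · subst h2n
        -- path is l₁
        have hlast : t' (l₁.getLast h1n) = c := by
          have := hj (l₁.getLast h1n) (by rw [List.getLast?_eq_getLast h1n]; exact rfl)
            (Sum.inr ()) (by simp)
          rw [this]; simp [hs']
        have hhead : s' (l₁.head h1n) = b := by
          have he1 : (l₁ ++ [Sum.inr ()]).getLast (by simp) = Sum.inr () :=
            List.getLast_append_of_ne_nil _ (by simp)
          have he2 : (l₁ ++ ([Sum.inr ()] : List (D ⊕ Unit))).head (by simp) = l₁.head h1n := by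
            rw [List.head_append]
            simp [h1n]
          rw [he1, he2] at hwrap
          rw [← hwrap]; simp [ht']
        exact ⟨l₁, h1n, fun e _ => Finset.mem_univ e, h1, hhead, hlast⟩
      · -- path is l₂ ++ l₁
        have hL : l₂ ++ l₁ ≠ [] := by simp [h1n]
        have hlastl : (l₁ ++ Sum.inr () :: l₂).getLast (by simp) = l₂.getLast h2n := by
          rw [List.getLast_append_of_ne_nil _ (by simp : (Sum.inr () :: l₂ : List (D ⊕ Unit)) ≠ [])]
          exact List.getLast_cons h2n
        have hheadl : (l₁ ++ Sum.inr () :: l₂).head (by simp) = l₁.head h1n := by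
          rw [List.head_append]; simp [h1n]
        rw [hlastl, hheadl] at hwrap
        refine ⟨l₂ ++ l₁, hL, fun e _ => Finset.mem_univ e, ?_, ?_, ?_⟩
        · simp only [List.Chain']
          rw [List.isChain_append]
          refine ⟨h2, h1, ?_⟩
          intro x hx y hy
          rw [List.getLast?_eq_getLast h2n, Option.mem_some_iff] at hx
          rw [List.head?_eq_head h1n, Option.mem_some_iff] at hy
          rw [← hx, ← hy]
          exact hwrap
        · have hh : (l₂ ++ l₁).head hL = l₂.head h2n := by
            rw [List.head_append]; simp [h2n]
          rw [hh]
          have := h20 (l₂.head h2n) (by rw [List.head?_eq_head h2n]; exact rfl)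
          rw [← this]; simp [ht']
        · have hg : (l₂ ++ l₁).getLast hL = l₁.getLast h1n :=
            List.getLast_append_of_ne_nil _ h1n
          rw [hg]
          have := hj (l₁.getLast h1n) (by rw [List.getLast?_eq_getLast h1n]; exact rfl)
            (Sum.inr ()) (by simp)
          rw [this]; simp [hs']
  · -- cycle avoiding the new arc is a cycle in Γ
    apply hnocyc
    have hagree : ∀ e ∈ l, s' e = s₀ e ∧ t' e = t' e := by
      intro e he
      refine ⟨?_, rfl⟩
      rcases e with d | u
      · simp [hs', hs₀]
      · exact absurd he hin
    refine ⟨l, hl, hmem, chain'_congr_aux s' s₀ t' t' l hagree hchain, ?_⟩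
    rw [← (hagree (l.head hl) (List.head_mem hl)).1]
    exact hwrap
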